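/- The suboptimality bound ε_N is nonincreasing in N: ε_{N+1} ≤ ε_N for all N ≥ 0. -/

import Mathlib

set_option linter.unusedSectionVars false
set_option linter.unnecessarySimpa false
set_option maxHeartbeats 800000


open Finset

variable {S A : Type*} [Fintype S] [Fintype A] [DecidableEq S] [Nonempty S] [Nonempty A]

/-- Belief distribution after taking the blind action sequence `l` from root state `s`:
the `s`-th row of the product of the transition matrices along `l`. -/
noncomputable def belief (T : A → Matrix S S ℝ) (s : S) (l : List A) : S → ℝ :=
  fun s' => ((l.map T).prod) s s'

/-- Expected one-step cost of action `a` under belief `B`. -/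
def beliefCost (C : A → S → ℝ) (B : S → ℝ) (a : A) : ℝ := ∑ s, B s * C a s

/-- Belief obtained from `B` by one further (blind) transition under action `a`. -/
def beliefStep (T : A → Matrix S S ℝ) (B : S → ℝ) (a : A) : S → ℝ :=
  fun s' => ∑ s, B s * T a s s'

/-- Bellman optimality equation for the sensing-cost MDP `M_k`: at every state
`(s, l)` the value is the minimum, over actions `a`, of the blind continuation and
the sensing continuation. -/
def IsBellmanMk (T : A → Matrix S S ℝ) (C : A → S → ℝ) (α k : ℝ)
    (V : S → List A → ℝ) : Prop :=
  ∀ (s : S) (l : List A),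
    V s l = Finset.univ.inf' Finset.univ_nonempty (fun a : A =>
      min (beliefCost C (belief T s l) a + α * V s (l ++ [a]))
          (beliefCost C (belief T s l) a + k
            + α * ∑ j, beliefStep T (belief T s l) a j * V j []))

/-- Bellman optimality equations for the depth-`N` truncation `M_{k,N}`: below layer `N`
both blind and sensing actions are available; at layer `N` sensing is forced. -/
def IsBellmanMkTrunc (T : A → Matrix S S ℝ) (C : A → S → ℝ) (α k : ℝ) (N : ℕ)
    (V : S → List A → ℝ) : Prop :=
  (∀ (s : S) (l : List A), l.length < N →
    V s l = Finset.univ.inf' Finset.univ_nonempty (fun a : A =>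
      min (beliefCost C (belief T s l) a + α * V s (l ++ [a]))
          (beliefCost C (belief T s l) a + k
            + α * ∑ j, beliefStep T (belief T s l) a j * V j []))) ∧
  (∀ (s : S) (l : List A), l.length = N →
    V s l = Finset.univ.inf' Finset.univ_nonempty (fun a : A =>
      beliefCost C (belief T s l) a + k
        + α * ∑ j, beliefStep T (belief T s l) a j * V j []))
/-- Expected cumulative discounted cost of the blind action sequence `l` from root `s`. -/
noncomputable def Zcost (T : A → Matrix S S ℝ) (C : A → S → ℝ) (α : ℝ)
    (s : S) (l : List A) : ℝ :=
  ∑ i : Fin l.length, α ^ (i : ℕ) * beliefCost C (belief T s (l.take i)) (l.get i)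

/-- Zero-sensing-cost always-sense value at belief `B`: `min_a B·Q*(a)`. -/
noncomputable def VAS0 (Qstar : A → S → ℝ) (B : S → ℝ) : ℝ :=
  Finset.univ.inf' Finset.univ_nonempty (fun a : A => ∑ s, B s * Qstar a s)
/-- The suboptimality bound
`ε_N = max_j [ V*_{M_{k,N}}(j) − min_{i ∈ L^j_{N+1}} (Z(i) + α^{N+1} V_{AS;0}(i)) ]`,
where the layer-(N+1) descendants of `j` are indexed by action sequences of length `N+1`. -/
noncomputable def epsBound (T : A → Matrix S S ℝ) (C : A → S → ℝ) (α : ℝ)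
    (Qstar : A → S → ℝ) (N : ℕ) (VN : S → List A → ℝ) : ℝ :=
  Finset.univ.sup' Finset.univ_nonempty (fun j : S =>
    VN j [] - Finset.univ.inf' Finset.univ_nonempty
      (fun v : Fin (N + 1) → A =>
        Zcost T C α j (List.ofFn v)
          + α ^ (N + 1) * VAS0 Qstar (belief T j (List.ofFn v))))
lemma belief_append (T : A → Matrix S S ℝ) (s : S) (l : List A) (a : A) :
    belief T s (l ++ [a]) = beliefStep T (belief T s l) a := by
  funext s'; simp [belief, beliefStep, Matrix.mul_apply]
lemma belief_nil (T : A → Matrix S S ℝ) (s : S) :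
    belief T s [] = fun s' => if s = s' then (1:ℝ) else 0 := by
  funext s'; simp [belief, Matrix.one_apply]
lemma belief_nonneg (T : A → Matrix S S ℝ) (hT : ∀ a s s', 0 ≤ T a s s')
    (s : S) (l : List A) : ∀ s', 0 ≤ belief T s l s' := by
  induction l using List.reverseRecOn with
  | nil => intro s'; rw [belief_nil]; positivity
  | append_singleton l a ih =>
      intro s'; rw [belief_append]
      exact Finset.sum_nonneg fun x _ => mul_nonneg (ih x) (hT a x s')
lemma belief_sum (T : A → Matrix S S ℝ) (hT : ∀ a s, ∑ s', T a s s' = 1)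
    (s : S) (l : List A) : ∑ s', belief T s l s' = 1 := by
  induction l using List.reverseRecOn with
  | nil => rw [belief_nil]; simp
  | append_singleton l a ih =>
      rw [belief_append]; simp only [beliefStep]
      rw [Finset.sum_comm]; simp_rw [← Finset.mul_sum, hT, mul_one]; exact ih
lemma inf'_le_inf'_add {ι : Type*} [Fintype ι] [Nonempty ι] (f g : ι → ℝ) (c : ℝ)
    (h : ∀ a, f a ≤ g a + c) :
    Finset.univ.inf' Finset.univ_nonempty f ≤ Finset.univ.inf' Finset.univ_nonempty g + c := by
  obtain ⟨a, -, ha⟩ := Finset.exists_mem_eq_inf' (Finset.univ_nonempty) g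
  calc Finset.univ.inf' Finset.univ_nonempty f ≤ f a := Finset.inf'_le _ (Finset.mem_univ a)
    _ ≤ g a + c := h a
    _ = _ := by rw [← ha]

/-- Extension of the depth-`N` optimal value `W` to layer `N+1` by forced sensing. -/
noncomputable def Wext (T : A → Matrix S S ℝ) (C : A → S → ℝ) (α k : ℝ) (N : ℕ)
    (W : S → List A → ℝ) : S → List A → ℝ := fun s l =>
  if l.length = N + 1 then
    Finset.univ.inf' Finset.univ_nonempty (fun a : A =>
      beliefCost C (belief T s l) a + k
        + α * ∑ j, beliefStep T (belief T s l) a j * W j [])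
  else W s l

noncomputable def gap (V W' : S → List A → ℝ) (m : ℕ) : ℝ :=
  (Finset.univ : Finset (S × (Fin m → A))).sup' Finset.univ_nonempty
    (fun p => V p.1 (List.ofFn p.2) - W' p.1 (List.ofFn p.2))

noncomputable def dmax (V W' : S → List A → ℝ) (N : ℕ) : ℝ :=
  (Finset.range (N + 2)).sup' (by simp) (gap V W')

lemma sub_le_dmax (V W' : S → List A → ℝ) (N : ℕ) (s : S) (l : List A)
    (hl : l.length ≤ N + 1) : V s l - W' s l ≤ dmax V W' N := by
  have h1 : V s l - W' s l ≤ gap V W' l.length := by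
    have := Finset.le_sup' (f := fun p : S × (Fin l.length → A) =>
      V p.1 (List.ofFn p.2) - W' p.1 (List.ofFn p.2)) (Finset.mem_univ (s, l.get))
    simpa only [gap, List.ofFn_get] using this
  exact h1.trans (Finset.le_sup' _ (Finset.mem_range.mpr (by omega)))

lemma trunc_mono (T : A → Matrix S S ℝ) (C : A → S → ℝ) (α k : ℝ)
    (hα0 : 0 < α) (hα1 : α < 1)
    (hTnonneg : ∀ a s s', 0 ≤ T a s s') (hTsum : ∀ a s, ∑ s', T a s s' = 1)
    (N : ℕ) (V W : S → List A → ℝ)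
    (hV : IsBellmanMkTrunc T C α k (N + 1) V) (hW : IsBellmanMkTrunc T C α k N W) :
    ∀ s, V s [] ≤ W s [] := by
  set W' := Wext T C α k N W with hW'def
  set d := dmax V W' N with hd
  -- W' agrees with W below layer N+1
  have hW'eq : ∀ s (l : List A), l.length ≤ N → W' s l = W s l := by
    intro s l hl
    simp only [hW'def, Wext, if_neg (by omega : ¬ l.length = N + 1)]
  -- sensing branch comparison
  have hsens : ∀ (s : S) (l : List A) (a : A),
      α * ∑ j, beliefStep T (belief T s l) a j * V j []
        ≤ α * ∑ j, beliefStep T (belief T s l) a j * W j [] + α * d := by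
    intro s l a
    have hb : ∀ j, 0 ≤ beliefStep T (belief T s l) a j := fun j =>
      Finset.sum_nonneg fun x _ =>
        mul_nonneg (belief_nonneg T hTnonneg s l x) (hTnonneg a x j)
    have hbsum : ∑ j, beliefStep T (belief T s l) a j = 1 := by
      have := belief_sum T hTsum s (l ++ [a])
      rwa [belief_append] at this
    have hVW : ∀ j, V j [] ≤ W j [] + d := by
      intro j
      have := sub_le_dmax V W' N j [] (by simp)
      rw [hW'eq j [] (by simp)] at this
      linarith
    have : ∑ j, beliefStep T (belief T s l) a j * V j []
        ≤ ∑ j, beliefStep T (belief T s l) a j * W j [] + d := by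
      calc ∑ j, beliefStep T (belief T s l) a j * V j []
          ≤ ∑ j, beliefStep T (belief T s l) a j * (W j [] + d) :=
            Finset.sum_le_sum fun j _ => mul_le_mul_of_nonneg_left (hVW j) (hb j)
        _ = ∑ j, beliefStep T (belief T s l) a j * W j []
            + (∑ j, beliefStep T (belief T s l) a j) * d := by
            rw [Finset.sum_mul]; rw [← Finset.sum_add_distrib]
            exact Finset.sum_congr rfl fun j _ => by ring
        _ = _ := by rw [hbsum, one_mul]
    nlinarith
  -- the main contraction step
  have main : ∀ (s : S) (l : List A), l.length ≤ N + 1 → V s l - W' s l ≤ α * d := by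
    intro s l hl
    rcases eq_or_lt_of_le hl with hNe | hlt
    · -- layer N+1 : forced sensing on both sides
      have hVeq := hV.2 s l hNe
      have hW'e : W' s l = Finset.univ.inf' Finset.univ_nonempty (fun a : A =>
          beliefCost C (belief T s l) a + k
            + α * ∑ j, beliefStep T (belief T s l) a j * W j []) := by
        simp only [hW'def, Wext, if_pos hNe]
      rw [hVeq, hW'e, sub_le_iff_le_add, add_comm]
      refine inf'_le_inf'_add _ _ _ fun a => ?_
      have := hsens s l a; linarith
    · -- layer ≤ N
      have hlN : l.length ≤ N := by omega
      have hVeq := hV.1 s l (by omega)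
      have hW'ge : Finset.univ.inf' Finset.univ_nonempty (fun a : A =>
          min (beliefCost C (belief T s l) a + α * W' s (l ++ [a]))
              (beliefCost C (belief T s l) a + k
                + α * ∑ j, beliefStep T (belief T s l) a j * W j [])) ≤ W' s l := by
        rcases eq_or_lt_of_le hlN with hNe2 | hlt2
        · -- l.length = N : W' s l = W s l = inf' sensing ≥ inf' min
          rw [hW'eq s l hlN, hW.2 s l hNe2]
          have := inf'_le_inf'_add (ι := A)
            (fun a => min (beliefCost C (belief T s l) a + α * W' s (l ++ [a]))
              (beliefCost C (belief T s l) a + k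
                + α * ∑ j, beliefStep T (belief T s l) a j * W j []))
            (fun a => beliefCost C (belief T s l) a + k
                + α * ∑ j, beliefStep T (belief T s l) a j * W j []) 0
            (fun a => by simpa using min_le_right _ _)
          simpa using this
        · -- l.length < N : exact Bellman equation for W
          rw [hW'eq s l hlN, hW.1 s l hlt2]
          refine le_of_eq (Finset.inf'_congr _ rfl fun a _ => ?_)
          rw [hW'eq s (l ++ [a]) (by simp; omega)]
      rw [sub_le_iff_le_add, add_comm, hVeq]
      refine le_trans ?_ (add_le_add hW'ge le_rfl)
      refine inf'_le_inf'_add _ _ _ fun a => ?_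
      have h1 : beliefCost C (belief T s l) a + α * V s (l ++ [a])
          ≤ beliefCost C (belief T s l) a + α * W' s (l ++ [a]) + α * d := by
        have := sub_le_dmax V W' N s (l ++ [a]) (by simp; omega)
        nlinarith
      have h2 : beliefCost C (belief T s l) a + k
            + α * ∑ j, beliefStep T (belief T s l) a j * V j []
          ≤ beliefCost C (belief T s l) a + k
            + α * ∑ j, beliefStep T (belief T s l) a j * W j [] + α * d := by
        have := hsens s l a; linarith
      calc min _ _ ≤ min (beliefCost C (belief T s l) a + α * W' s (l ++ [a]) + α * d)
            (beliefCost C (belief T s l) a + k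
              + α * ∑ j, beliefStep T (belief T s l) a j * W j [] + α * d) :=
            min_le_min h1 h2
        _ = _ := min_add_add_right _ _ _
  -- conclude d ≤ 0
  have hdle : d ≤ α * d := by
    rw [hd, dmax]
    refine Finset.sup'_le _ _ fun m hm => ?_
    rw [gap]
    refine Finset.sup'_le _ _ fun p _ => ?_
    refine main p.1 (List.ofFn p.2) ?_
    simp only [List.length_ofFn]
    exact Nat.lt_succ_iff.mp (by have := Finset.mem_range.mp hm; omega)
  have hd0 : d ≤ 0 := by nlinarith
  intro s
  have := sub_le_dmax V W' N s [] (by simp)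
  rw [hW'eq s [] (by simp)] at this
  linarith

lemma vstar_le (Qstar : A → S → ℝ) (Vstar : S → ℝ)
    (hBellman : ∀ s, Vstar s = Finset.univ.inf' Finset.univ_nonempty (fun a : A => Qstar a s))
    (B : S → ℝ) (hB : ∀ s, 0 ≤ B s) :
    ∑ s, B s * Vstar s ≤ VAS0 Qstar B := by
  refine Finset.le_inf' _ _ fun a _ => ?_
  refine Finset.sum_le_sum fun s _ => mul_le_mul_of_nonneg_left ?_ (hB s)
  rw [hBellman s]
  exact Finset.inf'_le _ (Finset.mem_univ a)

lemma VAS0_step (T : A → Matrix S S ℝ) (C : A → S → ℝ) (α : ℝ) (hα0 : 0 ≤ α)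
    (Vstar : S → ℝ) (Qstar : A → S → ℝ)
    (hQstar : ∀ a s, Qstar a s = C a s + α * ∑ s', T a s s' * Vstar s')
    (hBellman : ∀ s, Vstar s = Finset.univ.inf' Finset.univ_nonempty (fun a : A => Qstar a s))
    (B : S → ℝ) (hB : ∀ s, 0 ≤ B s) (hTnonneg : ∀ a s s', 0 ≤ T a s s') (a : A) :
    VAS0 Qstar B ≤ beliefCost C B a + α * VAS0 Qstar (beliefStep T B a) := by
  have h1 : VAS0 Qstar B ≤ ∑ s, B s * Qstar a s := Finset.inf'_le _ (Finset.mem_univ a)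
  have h2 : ∑ s, B s * Qstar a s
      = beliefCost C B a + α * ∑ s', beliefStep T B a s' * Vstar s' := by
    simp_rw [hQstar, mul_add, Finset.sum_add_distrib, beliefCost, beliefStep]
    congr 1
    simp_rw [Finset.mul_sum]
    rw [Finset.sum_comm]
    refine Finset.sum_congr rfl fun i _ => ?_
    rw [Finset.sum_mul, Finset.mul_sum]
    exact Finset.sum_congr rfl fun x _ => by ring
  have h3 : ∑ s', beliefStep T B a s' * Vstar s' ≤ VAS0 Qstar (beliefStep T B a) :=
    vstar_le Qstar Vstar hBellman _ (fun s' =>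
      Finset.sum_nonneg fun x _ => mul_nonneg (hB x) (hTnonneg a x s'))
  calc VAS0 Qstar B ≤ _ := h1
    _ = _ := h2
    _ ≤ _ := by nlinarith [h3]

lemma Zcost_append (T : A → Matrix S S ℝ) (C : A → S → ℝ) (α : ℝ) (s : S) (l : List A) (a : A) :
    Zcost T C α s (l ++ [a]) = Zcost T C α s l + α ^ l.length * beliefCost C (belief T s l) a := by
  have h : l.length + 1 = (l ++ [a]).length := by simp
  unfold Zcost
  rw [← Fin.sum_congr' (fun i : Fin (l ++ [a]).length =>
    α ^ (i : ℕ) * beliefCost C (belief T s ((l ++ [a]).take i)) ((l ++ [a]).get i)) h,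
    Fin.sum_univ_castSucc]
  congr 1
  · refine Finset.sum_congr rfl fun i _ => ?_
    have hi : ((Fin.cast h i.castSucc : Fin (l ++ [a]).length) : ℕ) = (i : ℕ) := rfl
    have ht : (l ++ [a]).take (i : ℕ) = l.take (i : ℕ) :=
      List.take_append_of_le_length (le_of_lt i.isLt)
    have hg : (l ++ [a]).get (Fin.cast h i.castSucc) = l.get i := by
      simp only [List.get_eq_getElem, hi]
      exact List.getElem_append_left i.isLt
    simp only [hi, ht, hg]
  · have hi : ((Fin.cast h (Fin.last l.length) : Fin (l ++ [a]).length) : ℕ) = l.length := rfl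
    have ht : (l ++ [a]).take l.length = l := by
      rw [List.take_append_of_le_length le_rfl, List.take_length]
    have hg : (l ++ [a]).get (Fin.cast h (Fin.last l.length)) = a := by
      simp only [List.get_eq_getElem, hi]
      simp
    simp only [hi, ht, hg]

/-- The suboptimality bound `ε_N` is nonincreasing in the truncation depth:
`ε_{N+1} ≤ ε_N`. -/
theorem epsilon_nonincreasing
    (T : A → Matrix S S ℝ) (C : A → S → ℝ) (α k : ℝ)
    (hα0 : 0 < α) (hα1 : α < 1) (hk : 0 < k)
    (hTnonneg : ∀ a s s', 0 ≤ T a s s') (hTsum : ∀ a s, ∑ s', T a s s' = 1)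
    (Vstar : S → ℝ) (Qstar : A → S → ℝ)
    (hQstar : ∀ a s, Qstar a s = C a s + α * ∑ s', T a s s' * Vstar s')
    (hBellman : ∀ s, Vstar s =
      Finset.univ.inf' Finset.univ_nonempty (fun a : A => Qstar a s))
    (VN : ℕ → S → List A → ℝ)
    (hVN : ∀ N, IsBellmanMkTrunc T C α k N (VN N)) :
    ∀ N : ℕ, epsBound T C α Qstar (N + 1) (VN (N + 1))
      ≤ epsBound T C α Qstar N (VN N) := by
  intro N
  unfold epsBound
  refine Finset.sup'_le _ _ fun j _ => ?_
  have hVle : VN (N + 1) j [] ≤ VN N j [] :=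
    trunc_mono T C α k hα0 hα1 hTnonneg hTsum N (VN (N + 1)) (VN N)
      (hVN (N + 1)) (hVN N) j
  have hinf : Finset.univ.inf' Finset.univ_nonempty
        (fun v : Fin (N + 1) → A =>
          Zcost T C α j (List.ofFn v)
            + α ^ (N + 1) * VAS0 Qstar (belief T j (List.ofFn v)))
      ≤ Finset.univ.inf' Finset.univ_nonempty
        (fun v : Fin (N + 1 + 1) → A =>
          Zcost T C α j (List.ofFn v)
            + α ^ (N + 1 + 1) * VAS0 Qstar (belief T j (List.ofFn v))) := by
    refine Finset.le_inf' _ _ fun v _ => ?_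
    set u : Fin (N + 1) → A := fun i => v i.castSucc with hu
    set a : A := v (Fin.last (N + 1)) with ha
    have hov : List.ofFn v = List.ofFn u ++ [a] := by
      rw [List.ofFn_succ', List.concat_eq_append]
    have hlen : (List.ofFn u).length = N + 1 := List.length_ofFn
    have hstep := VAS0_step T C α (le_of_lt hα0) Vstar Qstar hQstar hBellman
      (belief T j (List.ofFn u)) (belief_nonneg T hTnonneg j (List.ofFn u)) hTnonneg a
    have hZ := Zcost_append T C α j (List.ofFn u) a
    rw [hlen] at hZ
    have hpow : (0:ℝ) ≤ α ^ (N + 1) := pow_nonneg (le_of_lt hα0) _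
    have h2 : α ^ (N + 1) * VAS0 Qstar (belief T j (List.ofFn u))
        ≤ α ^ (N + 1) * beliefCost C (belief T j (List.ofFn u)) a
          + α ^ (N + 1 + 1) * VAS0 Qstar (beliefStep T (belief T j (List.ofFn u)) a) := by
      have := mul_le_mul_of_nonneg_left hstep hpow
      calc α ^ (N + 1) * VAS0 Qstar (belief T j (List.ofFn u)) ≤ _ := this
        _ = _ := by ring
    calc Finset.univ.inf' Finset.univ_nonempty
          (fun w : Fin (N + 1) → A =>
            Zcost T C α j (List.ofFn w)
              + α ^ (N + 1) * VAS0 Qstar (belief T j (List.ofFn w)))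
        ≤ Zcost T C α j (List.ofFn u)
            + α ^ (N + 1) * VAS0 Qstar (belief T j (List.ofFn u)) :=
          Finset.inf'_le _ (Finset.mem_univ u)
      _ ≤ Zcost T C α j (List.ofFn v)
            + α ^ (N + 1 + 1) * VAS0 Qstar (belief T j (List.ofFn v)) := by
          rw [hov, hZ, belief_append]
          linarith
  calc VN (N + 1) j [] - Finset.univ.inf' Finset.univ_nonempty
        (fun v : Fin (N + 1 + 1) → A =>
          Zcost T C α j (List.ofFn v)
            + α ^ (N + 1 + 1) * VAS0 Qstar (belief T j (List.ofFn v)))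
      ≤ VN N j [] - Finset.univ.inf' Finset.univ_nonempty
        (fun v : Fin (N + 1) → A =>
          Zcost T C α j (List.ofFn v)
            + α ^ (N + 1) * VAS0 Qstar (belief T j (List.ofFn v))) := by
        exact sub_le_sub hVle hinf
    _ ≤ _ := Finset.le_sup' (fun j : S => VN N j [] - Finset.univ.inf'
        Finset.univ_nonempty (fun v : Fin (N + 1) → A =>
          Zcost T C α j (List.ofFn v)
            + α ^ (N + 1) * VAS0 Qstar (belief T j (List.ofFn v))))
        (Finset.mem_univ j)
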